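/- Let K be an algebraically closed field, let k, n be positive integers with n ≥ 2 and gcd(k, n) = 1, and let a, b, c, d ∈ K with b ≠ 0 and a^n·d^{n-1} ≠ b^{n-1}·c^n. Then the affine set V = {(x, y, t) ∈ K³ : (t^n + c·t + d)·y^k = x^n + a·x + b and (c·t + d)·y^k = a·x + b} is irreducible; precisely, V is nonempty and for all polynomials p, q ∈ K[x, y, t], if the product p·q vanishes at every point of V, then p vanishes at every point of V or q vanishes at every point of V (i.e. the ideal of polynomials vanishing on V is prime). -/

import Mathlib

open Polynomial

noncomputable section StmtAux

/-- A linear polynomial with coprime coefficients over a domain is irreducible. -/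
theorem stmt1_irr_linear {R : Type*} [CommRing R] [IsDomain R] {A B : R}
    (hA : A ≠ 0) (h : IsCoprime A B) : Irreducible (C A * X + C B) := by
  have hdeg : (C A * X + C B).natDegree = 1 := natDegree_linear hA
  constructor
  · exact not_isUnit_of_natDegree_pos _ (by omega)
  · intro p q hpq
    have hne : C A * X + C B ≠ 0 := fun h0 => by simp [h0] at hdeg
    have hp0 : p ≠ 0 := fun h0 => hne (by simp [hpq, h0])
    have hq0 : q ≠ 0 := fun h0 => hne (by simp [hpq, h0])
    have hsum : p.natDegree + q.natDegree = 1 := by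
      rw [← natDegree_mul hp0 hq0, ← hpq, hdeg]
    have key : ∀ r s : R[X], C A * X + C B = r * s → r.natDegree = 0 → IsUnit r := by
      intro r s hrs hr0
      obtain ⟨r₀, rfl⟩ := natDegree_eq_zero.mp hr0
      have hdvd : C r₀ ∣ C A * X + C B := ⟨s, hrs⟩
      rw [C_dvd_iff_dvd_coeff] at hdvd
      have h1 := hdvd 1
      have h0 := hdvd 0
      simp [coeff_add, coeff_C_mul, coeff_X, coeff_C] at h1 h0
      exact isUnit_C.mpr (h.isUnit_of_dvd' h1 h0)
    rcases Nat.eq_zero_or_pos p.natDegree with hp | hp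
    · exact Or.inl (key p q hpq hp)
    · exact Or.inr (key q p (by rw [hpq, mul_comm]) (by omega))

/-- Two nonzero polynomials over an algebraically closed field with no common root
are coprime. -/
theorem stmt1_coprime_of_no_common_root {K : Type*} [Field K] [IsAlgClosed K]
    {A B : K[X]} (hA : A ≠ 0)
    (h : ∀ r : K, A.eval r = 0 → B.eval r = 0 → False) : IsCoprime A B := by
  classical
  rw [← EuclideanDomain.gcd_isUnit_iff]
  by_contra hg
  have hg0 : EuclideanDomain.gcd A B ≠ 0 := fun h0 =>
    hA (EuclideanDomain.gcd_eq_zero_iff.mp h0).1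
  have hdeg : (EuclideanDomain.gcd A B).degree ≠ 0 := by
    intro h0
    exact hg (isUnit_iff_degree_eq_zero.mpr h0)
  obtain ⟨r, hr⟩ := IsAlgClosed.exists_root _ hdeg
  obtain ⟨sA, hsA⟩ := EuclideanDomain.gcd_dvd_left A B
  obtain ⟨sB, hsB⟩ := EuclideanDomain.gcd_dvd_right A B
  refine h r ?_ ?_
  · rw [hsA, eval_mul, hr.eq_zero, zero_mul]
  · rw [hsB, eval_mul, hr.eq_zero, zero_mul]

/-- The isomorphism `K[x₀,x₁] ≃ K[u][t]` sending `x₀` to the outer variable `t`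
and `x₁` to the inner variable `u`. -/
def stmt1E (K : Type*) [Field K] : MvPolynomial (Fin 2) K ≃ₐ[K] Polynomial K[X] :=
  (MvPolynomial.finSuccEquiv K 1).trans (Polynomial.mapAlgEquiv
    ((MvPolynomial.finSuccEquiv K 0).trans
      (Polynomial.mapAlgEquiv (MvPolynomial.isEmptyAlgEquiv K (Fin 0)))))

theorem stmt1E_X0 {K : Type*} [Field K] : stmt1E K (MvPolynomial.X 0) = X := by
  simp [stmt1E, MvPolynomial.finSuccEquiv_X_zero]

theorem stmt1E_X1 {K : Type*} [Field K] : stmt1E K (MvPolynomial.X 1) = C X := by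
  have h : (1 : Fin 2) = Fin.succ 0 := rfl
  rw [stmt1E, AlgEquiv.trans_apply, h, MvPolynomial.finSuccEquiv_X_succ]
  simp [MvPolynomial.finSuccEquiv_X_zero]

theorem stmt1E_C {K : Type*} [Field K] (r : K) :
    stmt1E K (MvPolynomial.C r) = C (C r) := by
  rw [stmt1E, AlgEquiv.trans_apply, MvPolynomial.finSuccEquiv_apply]
  simp [MvPolynomial.finSuccEquiv_apply]
  exact MvPolynomial.coeff_zero_C r

theorem stmt1E_F2 {K : Type*} [Field K] (a b c d : K) (k n : ℕ) :
    stmt1E K ((MvPolynomial.C c * MvPolynomial.X 0 + MvPolynomial.C d)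
        * MvPolynomial.X 1 ^ (n*k)
      - MvPolynomial.C a * MvPolynomial.X 0 * MvPolynomial.X 1 ^ k - MvPolynomial.C b)
    = C (C c * X ^ (n*k) - C a * X ^ k) * X + C (C d * X ^ (n*k) - C b) := by
  rw [C_sub, C_sub, C_mul, C_mul, C_mul, C_pow, C_pow]
  simp only [map_sub, map_mul, map_add, map_pow, stmt1E_X0, stmt1E_X1, stmt1E_C]
  ring

/-- Nullstellensatz for a prime polynomial in two variables. -/
theorem stmt1_dvd_of_vanish {K : Type*} [Field K] [IsAlgClosed K]
    {F G : MvPolynomial (Fin 2) K} (hF : Prime F)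
    (h : ∀ w : Fin 2 → K, MvPolynomial.eval w F = 0 → MvPolynomial.eval w G = 0) :
    F ∣ G := by
  have hmem : G ∈ MvPolynomial.vanishingIdeal K
      (MvPolynomial.zeroLocus K (Ideal.span {F})) := by
    rw [MvPolynomial.mem_vanishingIdeal_iff]
    intro w hw
    refine h w ?_
    exact hw F (Ideal.subset_span rfl)
  rw [MvPolynomial.vanishingIdeal_zeroLocus_eq_radical] at hmem
  have hprime : (Ideal.span {F}).IsPrime :=
    (Ideal.span_singleton_prime hF.ne_zero).mpr hF
  rw [hprime.radical] at hmem
  exact Ideal.mem_span_singleton.mp hmem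

end StmtAux

/-- Geometric irreducibility of the curve `C` cut out of the surface
`X : (tⁿ + c·t + d)·yᵏ = xⁿ + a·x + b` by `(c·t + d)·yᵏ = a·x + b`,
for coprime `k` and `n`: the affine locus `V` over an algebraically closed
field is nonempty and its vanishing ideal is prime. -/
theorem stmt_1 (K : Type*) [Field K] [IsAlgClosed K] (k n : ℕ)
    (hk : 0 < k) (hn : 2 ≤ n) (hcop : Nat.Coprime k n)
    (a b c d : K) (hb : b ≠ 0)
    (hiso : a ^ n * d ^ (n - 1) ≠ b ^ (n - 1) * c ^ n)
    (V : Set (Fin 3 → K))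
    (hV : V = {v | (v 2 ^ n + c * v 2 + d) * v 1 ^ k = v 0 ^ n + a * v 0 + b ∧
                   (c * v 2 + d) * v 1 ^ k = a * v 0 + b}) :
    V.Nonempty ∧
    ∀ p q : MvPolynomial (Fin 3) K,
      (∀ v ∈ V, MvPolynomial.eval v (p * q) = 0) →
      (∀ v ∈ V, MvPolynomial.eval v p = 0) ∨ (∀ v ∈ V, MvPolynomial.eval v q = 0) := by
  subst hV
  obtain ⟨m, rfl⟩ : ∃ m, n = m + 2 := ⟨n - 2, by omega⟩
  set n := m + 2 with hn_def
  have hn1 : n - 1 = m + 1 := rfl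
  rw [hn1] at hiso
  -- the two coefficient polynomials
  set A : K[X] := C c * X ^ (n*k) - C a * X ^ k with hA_def
  set B : K[X] := C d * X ^ (n*k) - C b with hB_def
  have hknk : k < n * k := by nlinarith
  -- no common root
  have hnocommon : ∀ r : K, A.eval r = 0 → B.eval r = 0 → False := by
    intro r h1 h2
    simp only [hA_def, hB_def, eval_sub, eval_mul, eval_pow, eval_C, eval_X] at h1 h2
    have hr0 : r ≠ 0 := by
      rintro rfl
      rw [zero_pow (by positivity)] at h2
      simp at h2
      exact hb h2
    have e1 : (c * r ^ (n*k)) ^ n = (a * r ^ k) ^ n := by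
      rw [sub_eq_zero] at h1; rw [h1]
    have e2 : (d * r ^ (n*k)) ^ (m+1) = b ^ (m+1) := by
      rw [sub_eq_zero] at h2; rw [h2]
    have key : (a ^ n * d ^ (m+1) - b ^ (m+1) * c ^ n) * r ^ (n*n*k) = 0 := by
      simp only [hn_def] at e1 e2 ⊢
      linear_combination (-(d^(m+1) * r^((m+1)*(m+2)*k))) * e1
        + (c^(m+2) * r^((m+2)*(m+2)*k)) * e2
    rcases mul_eq_zero.mp key with hzero | hzero
    · exact hiso (sub_eq_zero.mp hzero)
    · exact hr0 (pow_eq_zero_iff (by positivity) |>.mp hzero)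
  -- A ≠ 0
  have hA0 : A ≠ 0 := by
    intro h0
    by_cases hc : c = 0
    · have ha : a ≠ 0 := by
        intro ha
        exact hiso (by rw [ha, hc]; simp [zero_pow (n := n) (by positivity : n ≠ 0)])
      have : A.coeff k = -a := by
        simp [hA_def, hc, coeff_X_pow, hknk.ne, hknk.ne']
      rw [h0] at this
      exact ha (by simpa using this.symm)
    · have : A.coeff (n*k) = c := by
        simp [hA_def, coeff_X_pow, hknk.ne, hknk.ne']
      rw [h0] at this
      exact hc (by simpa using this.symm)
  have hB0 : B ≠ 0 := by
    intro h0
    have : B.coeff 0 = -b := by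
      simp [hB_def, coeff_X_pow, (by positivity : 0 < n*k).ne', (by positivity : 0 < k).ne']
    rw [h0] at this
    exact hb (by simpa using this.symm)
  have hcoprimeAB : IsCoprime A B := stmt1_coprime_of_no_common_root hA0 hnocommon
  -- the curve polynomial in two variables
  set F : MvPolynomial (Fin 2) K :=
    (MvPolynomial.C c * MvPolynomial.X 0 + MvPolynomial.C d) * MvPolynomial.X 1 ^ (n*k)
      - MvPolynomial.C a * MvPolynomial.X 0 * MvPolynomial.X 1 ^ k
      - MvPolynomial.C b with hF_def
  have hFirr : Irreducible F := by
    have h1 : Irreducible (stmt1E K F) := by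
      rw [hF_def, stmt1E_F2]
      exact stmt1_irr_linear hA0 hcoprimeAB
    exact (MulEquiv.irreducible_iff (stmt1E K).toMulEquiv).mp h1
  have hFprime : Prime F := hFirr.prime
  -- evaluation of F
  have hFeval : ∀ w : Fin 2 → K, MvPolynomial.eval w F =
      (c * w 0 + d) * w 1 ^ (n*k) - a * w 0 * w 1 ^ k - b := by
    intro w; simp [hF_def]
  -- parametrization map
  set φ : (Fin 2 → K) → (Fin 3 → K) := fun w => ![w 0 * w 1 ^ k, w 1 ^ n, w 0] with hφ_def
  set f : Fin 3 → MvPolynomial (Fin 2) K :=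
    ![MvPolynomial.X 0 * MvPolynomial.X 1 ^ k, MvPolynomial.X 1 ^ n, MvPolynomial.X 0]
    with hf_def
  have h_eval : ∀ (w : Fin 2 → K) (p : MvPolynomial (Fin 3) K),
      MvPolynomial.eval w (MvPolynomial.aeval f p) = MvPolynomial.eval (φ w) p := by
    intro w p
    apply MvPolynomial.induction_on p
    · intro r; simp [hφ_def]
    · intro p q hp hq; simp only [map_add, hp, hq]
    · intro p i hp
      rw [map_mul, map_mul, MvPolynomial.aeval_X, map_mul, hp]
      congr 1
      fin_cases i <;> simp [hf_def, hφ_def]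
  -- zeros of F map into V
  have hZV : ∀ w : Fin 2 → K, MvPolynomial.eval w F = 0 →
      φ w ∈ {v : Fin 3 → K |
        (v 2 ^ n + c * v 2 + d) * v 1 ^ k = v 0 ^ n + a * v 0 + b ∧
        (c * v 2 + d) * v 1 ^ k = a * v 0 + b} := by
    intro w hw
    rw [hFeval] at hw
    have hpow : (w 1 ^ n) ^ k = w 1 ^ (n * k) := by rw [← pow_mul]
    constructor
    · show (w 0 ^ n + c * w 0 + d) * (w 1 ^ n) ^ k
        = (w 0 * w 1 ^ k) ^ n + a * (w 0 * w 1 ^ k) + b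
      rw [hpow]
      have : (w 0 * w 1 ^ k) ^ n = w 0 ^ n * w 1 ^ (n*k) := by
        rw [mul_pow, ← pow_mul, Nat.mul_comm k n]
      rw [this]; linear_combination hw
    · show (c * w 0 + d) * (w 1 ^ n) ^ k = a * (w 0 * w 1 ^ k) + b
      rw [hpow]; linear_combination hw
  -- every point of V comes from a zero of F
  have hVZ : ∀ v ∈ {v : Fin 3 → K |
        (v 2 ^ n + c * v 2 + d) * v 1 ^ k = v 0 ^ n + a * v 0 + b ∧
        (c * v 2 + d) * v 1 ^ k = a * v 0 + b},
      ∃ w : Fin 2 → K, MvPolynomial.eval w F = 0 ∧ v = φ w := by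
    rintro v ⟨eq1, eq2⟩
    have hy0 : v 1 ≠ 0 := by
      intro hy
      rw [hy, zero_pow (by positivity : k ≠ 0), mul_zero] at eq1 eq2
      have hx : v 0 ^ n = 0 := by linear_combination eq2 - eq1
      have hx0 : v 0 = 0 := pow_eq_zero_iff (by positivity : n ≠ 0) |>.mp hx
      rw [hx0] at eq2
      simp at eq2
      exact hb eq2.symm
    have hxy : v 0 ^ n = v 2 ^ n * v 1 ^ k := by linear_combination eq2 - eq1
    obtain ⟨u, hu⟩ := IsAlgClosed.exists_pow_nat_eq (v 1) (n := n) (by positivity)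
    have hu0 : u ≠ 0 := by rintro rfl; exact hy0 (by rw [← hu]; simp [zero_pow (n := n) (by positivity : n ≠ 0)])
    by_cases ht : v 2 = 0
    · -- then v 0 = 0
      have hx0 : v 0 = 0 := by
        have : v 0 ^ n = 0 := by rw [hxy, ht, zero_pow (by positivity : n ≠ 0), zero_mul]
        exact pow_eq_zero_iff (by positivity : n ≠ 0) |>.mp this
      refine ⟨![0, u], ?_, ?_⟩
      · rw [hFeval]
        have : (u : K) ^ (n*k) = v 1 ^ k := by rw [pow_mul, hu]
        simp only [Matrix.cons_val_zero, Matrix.cons_val_one, Matrix.head_cons]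
        rw [this]
        rw [ht, hx0] at eq2
        linear_combination eq2
      · funext i
        fin_cases i <;> simp [hφ_def, hx0, ht, hu]
    · -- general case: adjust the n-th root by a root of unity
      have hden : v 2 * u ^ k ≠ 0 := by
        apply mul_ne_zero ht (pow_ne_zero _ hu0)
      set ζ : K := v 0 / (v 2 * u ^ k) with hζ_def
      have hxn : v 0 ^ n = (v 2 * u ^ k) ^ n := by
        rw [hxy, ← hu, mul_pow, ← pow_mul, ← pow_mul, Nat.mul_comm k n]
      have hζn : ζ ^ n = 1 := by
        rw [hζ_def, div_pow, hxn, div_self (pow_ne_zero _ hden)]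
      obtain ⟨s, -, hs⟩ := Nat.exists_mul_mod_eq_one_of_coprime hcop (by omega)
      have hks : k * s = n * (k * s / n) + 1 := by
        conv_lhs => rw [← Nat.div_add_mod (k * s) n]
        rw [hs]
      set u' : K := ζ ^ s * u with hu'_def
      have hu'n : u' ^ n = v 1 := by
        rw [hu'_def, mul_pow, ← pow_mul, Nat.mul_comm s n, pow_mul, hζn, one_pow, one_mul, hu]
      have hu'k : v 2 * u' ^ k = v 0 := by
        rw [hu'_def, mul_pow, ← pow_mul, Nat.mul_comm s k, hks, pow_add, pow_mul, hζn,
          one_pow, one_mul, pow_one, hζ_def]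
        field_simp
      refine ⟨![v 2, u'], ?_, ?_⟩
      · rw [hFeval]
        simp only [Matrix.cons_val_zero, Matrix.cons_val_one, Matrix.head_cons]
        have h1 : (u' : K) ^ (n*k) = v 1 ^ k := by rw [pow_mul, hu'n]
        rw [h1]
        have h2 : a * v 2 * u' ^ k = a * v 0 := by rw [mul_assoc, hu'k]
        linear_combination eq2 - h2
      · funext i
        fin_cases i <;> simp [hφ_def, hu'n, hu'k]
  -- nonemptiness
  have hinf : Infinite K := inferInstance
  have hu₀ : ∃ u₀ : K, A.eval u₀ ≠ 0 := by
    by_contra h0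
    push_neg at h0
    exact hA0 (Polynomial.funext fun r => by rw [h0 r, eval_zero])
  obtain ⟨u₀, hu₀⟩ := hu₀
  have hnonempty : ∃ w : Fin 2 → K, MvPolynomial.eval w F = 0 := by
    refine ⟨![-(B.eval u₀) / (A.eval u₀), u₀], ?_⟩
    rw [hFeval]
    simp only [Matrix.cons_val_zero, Matrix.cons_val_one, Matrix.head_cons]
    have hAe : A.eval u₀ = c * u₀ ^ (n*k) - a * u₀ ^ k := by
      simp [hA_def]
    have hBe : B.eval u₀ = d * u₀ ^ (n*k) - b := by
      simp [hB_def]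
    field_simp [hu₀]
    rw [hAe, hBe]
    ring
  constructor
  · obtain ⟨w, hw⟩ := hnonempty
    exact ⟨φ w, hZV w hw⟩
  · intro p q hpq
    have hvanish : ∀ w : Fin 2 → K, MvPolynomial.eval w F = 0 →
        MvPolynomial.eval w (MvPolynomial.aeval f p * MvPolynomial.aeval f q) = 0 := by
      intro w hw
      rw [← map_mul, h_eval]
      exact hpq (φ w) (hZV w hw)
    have hdvd : F ∣ MvPolynomial.aeval f p * MvPolynomial.aeval f q :=
      stmt1_dvd_of_vanish hFprime hvanish
    rcases hFprime.2.2 _ _ hdvd with hFp | hFq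
    · left
      intro v hv
      obtain ⟨w, hw, rfl⟩ := hVZ v hv
      obtain ⟨r, hr⟩ := hFp
      rw [← h_eval, hr, map_mul, hw, zero_mul]
    · right
      intro v hv
      obtain ⟨w, hw, rfl⟩ := hVZ v hv
      obtain ⟨r, hr⟩ := hFq
      rw [← h_eval, hr, map_mul, hw, zero_mul]
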